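/- For any non-zero matrix Z ∈ ℝ^{m×n} and t ∈ ℝ, the nuclear norm satisfies ‖Z‖_nuc ≤ t/2 if and only if there exist symmetric matrices V ∈ S^{m×m}, W ∈ S^{n×n} such that the block matrix [[V, Z], [Zᵀ, W]] is positive semidefinite and tr(V) + tr(W) ≤ t. Moreover, the same equivalence holds with the trace constraint as equality tr(V) + tr(W) = t. -/

import Mathlib

/-- The nuclear norm of `Z` (sum of the singular values of `Z`, i.e. the sum of the
square roots of the eigenvalues of `Zᴴ Z`). -/
noncomputable def nuclearNorm {m n : ℕ} (Z : Matrix (Fin m) (Fin n) ℝ) : ℝ :=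
  ∑ i, Real.sqrt ((Matrix.posSemidef_conjTranspose_mul_self Z).1.eigenvalues i)

open Matrix

namespace NSDP
variable {m n : ℕ}

noncomputable def hermA (Z : Matrix (Fin m) (Fin n) ℝ) : (Zᴴ * Z).IsHermitian :=
  (Matrix.posSemidef_conjTranspose_mul_self Z).1

noncomputable def μ (Z : Matrix (Fin m) (Fin n) ℝ) : Fin n → ℝ := (hermA Z).eigenvalues
noncomputable def σ (Z : Matrix (Fin m) (Fin n) ℝ) : Fin n → ℝ := fun i => Real.sqrt (μ Z i)
noncomputable def v (Z : Matrix (Fin m) (Fin n) ℝ) : Fin n → Fin n → ℝ :=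
  fun i => ⇑((hermA Z).eigenvectorBasis i)
noncomputable def u (Z : Matrix (Fin m) (Fin n) ℝ) : Fin n → Fin m → ℝ :=
  fun i => (σ Z i)⁻¹ • (Z *ᵥ v Z i)

variable (Z : Matrix (Fin m) (Fin n) ℝ)

lemma mu_nonneg (i) : 0 ≤ μ Z i := (Matrix.posSemidef_conjTranspose_mul_self Z).eigenvalues_nonneg i
lemma sigma_nonneg (i) : 0 ≤ σ Z i := Real.sqrt_nonneg _
lemma sigma_sq (i) : σ Z i * σ Z i = μ Z i := Real.mul_self_sqrt (mu_nonneg Z i)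
lemma sigma_eq_zero_iff (i) : σ Z i = 0 ↔ μ Z i = 0 := by
  constructor
  · intro h; rw [← sigma_sq Z i, h, mul_zero]
  · intro h; simp [σ, h]

lemma eig (i) : (Zᴴ * Z) *ᵥ v Z i = μ Z i • v Z i := (hermA Z).mulVec_eigenvectorBasis i

lemma ortho (i j) : v Z i ⬝ᵥ v Z j = if i = j then 1 else 0 := by
  have h := (orthonormal_iff_ite.mp (hermA Z).eigenvectorBasis.orthonormal) i j
  simpa [PiLp.inner_apply, dotProduct, RCLike.inner_apply, v, mul_comm] using h

lemma nuclearNorm_eq' : (∑ i, Real.sqrt ((Matrix.posSemidef_conjTranspose_mul_self Z).1.eigenvalues i)) = ∑ i, σ Z i := rfl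

lemma dp_trans (x : Fin n → ℝ) (w : Fin m → ℝ) : x ⬝ᵥ (Zᴴ *ᵥ w) = (Z *ᵥ x) ⬝ᵥ w := by
  simp only [dotProduct, mulVec, conjTranspose_apply, star_trivial, Finset.mul_sum,
    Finset.sum_mul]
  rw [Finset.sum_comm]
  congr 1; ext j; congr 1; ext k; ring

lemma dp_ZZ (x y : Fin n → ℝ) : (Z *ᵥ x) ⬝ᵥ (Z *ᵥ y) = x ⬝ᵥ ((Zᴴ * Z) *ᵥ y) := by
  rw [← mulVec_mulVec, dp_trans]

lemma trace_mul_vecMulVec {k : ℕ} (M : Matrix (Fin k) (Fin k) ℝ) (a b : Fin k → ℝ) :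
    (M * vecMulVec a b).trace = b ⬝ᵥ (M *ᵥ a) := by
  simp only [trace, diag, Matrix.mul_apply, vecMulVec_apply, dotProduct, mulVec, Finset.mul_sum]
  congr 1; ext c; congr 1; ext k; ring

lemma vecMulVec_mul_vecMulVec {a b : ℕ} (p : Fin a → ℝ) (q r : Fin b → ℝ) (s : Fin a → ℝ) :
    vecMulVec p q * vecMulVec r s = (q ⬝ᵥ r) • vecMulVec p s := by
  ext i j
  simp only [Matrix.mul_apply, vecMulVec_apply, dotProduct, Matrix.smul_apply, Finset.sum_mul,
    smul_eq_mul, Finset.mul_sum]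
  congr 1; ext k; ring

lemma Zv_dp (i j) : (Z *ᵥ v Z i) ⬝ᵥ (Z *ᵥ v Z j) = if i = j then μ Z i else 0 := by
  rw [dp_ZZ, eig, dotProduct_smul, ortho]
  by_cases h : i = j <;> simp [h, mul_comm]

lemma Zv_zero (i : Fin n) (h : μ Z i = 0) : Z *ᵥ v Z i = 0 := by
  have h2 := Zv_dp Z i i
  rw [if_pos rfl, h] at h2
  exact dotProduct_self_eq_zero.mp h2

lemma uZv (i) : u Z i ⬝ᵥ (Z *ᵥ v Z i) = σ Z i := by
  by_cases h : μ Z i = 0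
  · simp [u, Zv_zero Z i h, (sigma_eq_zero_iff Z i).mpr h]
  · have hs : σ Z i ≠ 0 := fun hs => h ((sigma_eq_zero_iff Z i).mp hs)
    simp only [u, smul_dotProduct, Zv_dp Z i i, if_pos rfl, smul_eq_mul]
    field_simp
    rw [← sigma_sq Z i]
    rw [if_pos trivial]; ring

lemma uu (i j) : u Z i ⬝ᵥ u Z j = if i = j then (if μ Z i = 0 then 0 else 1) else 0 := by
  simp only [u, smul_dotProduct, dotProduct_smul, Zv_dp Z i j, smul_eq_mul]
  by_cases h : i = j
  · subst h
    by_cases h0 : μ Z i = 0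
    · simp [h0]
    · have hs : σ Z i ≠ 0 := fun hs => h0 ((sigma_eq_zero_iff Z i).mp hs)
      rw [if_pos rfl, if_pos rfl, if_neg h0, ← sigma_sq Z i]
      field_simp
  · simp [h]

lemma complete : ∑ i, vecMulVec (v Z i) (v Z i) = (1 : Matrix (Fin n) (Fin n) ℝ) := by
  set P : Matrix (Fin n) (Fin n) ℝ := Matrix.of (fun k i => v Z i k) with hP
  have h1 : Pᵀ * P = 1 := by
    ext i j
    simp only [Matrix.mul_apply, transpose_apply, hP, Matrix.of_apply, one_apply]
    simpa [dotProduct] using ortho Z i j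
  have h2 : P * Pᵀ = 1 := mul_eq_one_comm.mp h1
  ext a b
  have h3 := congrFun (congrFun h2 a) b
  simp only [Matrix.mul_apply, transpose_apply, hP, Matrix.of_apply] at h3
  simpa [Matrix.sum_apply, vecMulVec_apply] using h3

lemma psd_vecMulVec {k : Type*} [Fintype k] (a : k → ℝ) : (vecMulVec a a).PosSemidef := by
  refine Matrix.PosSemidef.of_dotProduct_mulVec_nonneg ?_ ?_
  · ext i j; simp [vecMulVec_apply, conjTranspose_apply, mul_comm]
  · intro x
    have h : (vecMulVec a a) *ᵥ x = (a ⬝ᵥ x) • a := by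
      ext i
      simp only [mulVec, vecMulVec_apply, dotProduct, Pi.smul_apply, smul_eq_mul,
        Finset.sum_mul]
      exact Finset.sum_congr rfl fun k _ => by ring
    rw [h]
    simp only [star_trivial, dotProduct_smul, smul_eq_mul]
    rw [dotProduct_comm]
    exact mul_self_nonneg _

lemma psd_smul {k : Type*} [Fintype k] {M : Matrix k k ℝ} (hM : M.PosSemidef) {c : ℝ} (hc : 0 ≤ c) :
    (c • M).PosSemidef := by
  refine Matrix.PosSemidef.of_dotProduct_mulVec_nonneg ?_ ?_
  · have h1 := hM.1
    unfold Matrix.IsHermitian at h1 ⊢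
    rw [conjTranspose_smul, h1]
    congr 1
  · intro x
    rw [smul_mulVec, dotProduct_smul, smul_eq_mul]
    exact mul_nonneg hc (hM.dotProduct_mulVec_nonneg x)

lemma psd_sum {k : Type*} [Fintype k] {N : ℕ} (f : Fin N → Matrix k k ℝ) (h : ∀ i, (f i).PosSemidef) :
    (∑ i, f i).PosSemidef :=
  Finset.sum_induction f (fun M => M.PosSemidef) (fun _ _ ha hb => ha.add hb)
    Matrix.PosSemidef.zero (fun i _ => h i)

lemma trace_vecMulVec {k : ℕ} (a b : Fin k → ℝ) : (vecMulVec a b).trace = a ⬝ᵥ b := by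
  simp [trace, diag, vecMulVec_apply, dotProduct]

lemma trace_htmul_nonneg {a b : ℕ} (M : Matrix (Fin a) (Fin b) ℝ) : 0 ≤ (Mᴴ * M).trace := by
  rw [trace]
  refine Finset.sum_nonneg fun j _ => ?_
  simp only [diag, Matrix.mul_apply, conjTranspose_apply, star_trivial]
  exact Finset.sum_nonneg fun k _ => mul_self_nonneg _



noncomputable def Vz : Matrix (Fin m) (Fin m) ℝ := ∑ i, σ Z i • vecMulVec (u Z i) (u Z i)
noncomputable def Wz : Matrix (Fin n) (Fin n) ℝ := ∑ i, σ Z i • vecMulVec (v Z i) (v Z i)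

lemma key_entry (i : Fin n) (a : Fin m) (b : Fin n) :
    σ Z i * (u Z i a * v Z i b) = (Z *ᵥ v Z i) a * v Z i b := by
  by_cases h : μ Z i = 0
  · rw [Zv_zero Z i h]
    have h0 : σ Z i = 0 := (sigma_eq_zero_iff Z i).mpr h
    simp [h0]
  · have hs : σ Z i ≠ 0 := fun hs => h ((sigma_eq_zero_iff Z i).mp hs)
    simp only [u, Pi.smul_apply, smul_eq_mul]
    field_simp

lemma Z_sum_eq : ∑ i, vecMulVec (Z *ᵥ v Z i) (v Z i) = Z := by
  have h : ∀ i : Fin n, vecMulVec (Z *ᵥ v Z i) (v Z i) = Z * vecMulVec (v Z i) (v Z i) := by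
    intro i; ext a b
    simp only [vecMulVec_apply, Matrix.mul_apply, mulVec, dotProduct, Finset.sum_mul]
    exact Finset.sum_congr rfl fun k _ => by ring
  simp_rw [h]
  rw [← Matrix.mul_sum, complete, Matrix.mul_one]

lemma blocks_eq :
    fromBlocks (Vz Z) Z Zᵀ (Wz Z) =
      ∑ i, σ Z i • vecMulVec (Sum.elim (u Z i) (v Z i)) (Sum.elim (u Z i) (v Z i)) := by
  ext a b
  rcases a with a | a <;> rcases b with b | b
  · -- inl inl
    simp only [fromBlocks_apply₁₁, Matrix.sum_apply, Matrix.smul_apply, vecMulVec_apply, Sum.elim_inl,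
      smul_eq_mul, Vz]
  · -- inl inr
    simp only [fromBlocks_apply₁₂, Matrix.sum_apply, Matrix.smul_apply, vecMulVec_apply, Sum.elim_inl,
      Sum.elim_inr, smul_eq_mul]
    rw [← congrFun (congrFun (Z_sum_eq Z) a) b]
    simp only [Matrix.sum_apply, vecMulVec_apply]
    exact Finset.sum_congr rfl fun i _ => (key_entry Z i a b).symm
  · -- inr inl
    simp only [fromBlocks_apply₂₁, Matrix.sum_apply, Matrix.smul_apply, vecMulVec_apply, Sum.elim_inl,
      Sum.elim_inr, smul_eq_mul, transpose_apply]
    rw [← congrFun (congrFun (Z_sum_eq Z) b) a]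
    simp only [Matrix.sum_apply, vecMulVec_apply]
    refine Finset.sum_congr rfl fun i _ => ?_
    rw [← key_entry Z i b a]; ring
  · -- inr inr
    simp only [fromBlocks_apply₂₂, Matrix.sum_apply, Matrix.smul_apply, vecMulVec_apply, Sum.elim_inr,
      smul_eq_mul, Wz]

lemma blocks_psd : (fromBlocks (Vz Z) Z Zᵀ (Wz Z)).PosSemidef := by
  rw [blocks_eq]
  apply psd_sum
  intro i
  exact psd_smul (psd_vecMulVec (Sum.elim (u Z i) (v Z i))) (sigma_nonneg Z i)

lemma Vz_symm : (Vz Z).IsSymm := by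
  unfold Matrix.IsSymm Vz
  rw [transpose_sum]
  refine Finset.sum_congr rfl fun i _ => ?_
  rw [transpose_smul]
  congr 1
  ext a b; simp [vecMulVec_apply, mul_comm]

lemma Wz_symm : (Wz Z).IsSymm := by
  unfold Matrix.IsSymm Wz
  rw [transpose_sum]
  refine Finset.sum_congr rfl fun i _ => ?_
  rw [transpose_smul]
  congr 1
  ext a b; simp [vecMulVec_apply, mul_comm]

lemma trace_Vz : (Vz Z).trace = ∑ i, σ Z i := by
  unfold Vz
  rw [trace_sum]
  refine Finset.sum_congr rfl fun i _ => ?_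
  rw [trace_smul, trace_vecMulVec, uu, if_pos rfl, smul_eq_mul]
  by_cases h : μ Z i = 0
  · rw [if_pos h, mul_zero, (sigma_eq_zero_iff Z i).mpr h]
  · rw [if_neg h, mul_one]

lemma trace_Wz : (Wz Z).trace = ∑ i, σ Z i := by
  unfold Wz
  rw [trace_sum]
  refine Finset.sum_congr rfl fun i _ => ?_
  rw [trace_smul, trace_vecMulVec, ortho, if_pos rfl, smul_eq_mul, mul_one]

lemma forward (hZ : Z ≠ 0) (t : ℝ) (h : ∑ i, σ Z i ≤ t / 2) :
    ∃ V : Matrix (Fin m) (Fin m) ℝ, ∃ W : Matrix (Fin n) (Fin n) ℝ,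
      V.IsSymm ∧ W.IsSymm ∧ (fromBlocks V Z Zᵀ W).PosSemidef ∧ V.trace + W.trace = t := by
  have hm : m ≠ 0 := by
    rintro rfl
    exact hZ (by ext i j; exact i.elim0)
  have hm' : (m : ℝ) ≠ 0 := Nat.cast_ne_zero.mpr hm
  set S := ∑ i, σ Z i with hS
  set c : ℝ := (t - 2 * S) / m with hc
  have hc0 : 0 ≤ c := by
    apply div_nonneg _ (Nat.cast_nonneg m)
    linarith
  refine ⟨Vz Z + c • 1, Wz Z, ?_, Wz_symm Z, ?_, ?_⟩
  · unfold Matrix.IsSymm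
    rw [transpose_add, transpose_smul, transpose_one, Vz_symm Z]
  · have hsplit : fromBlocks (Vz Z + c • 1) Z Zᵀ (Wz Z) =
        fromBlocks (Vz Z) Z Zᵀ (Wz Z) + fromBlocks (c • 1) 0 0 0 := by
      rw [fromBlocks_add, add_zero, add_zero, add_zero]
    rw [hsplit]
    refine (blocks_psd Z).add ?_
    have hd : fromBlocks (c • (1 : Matrix (Fin m) (Fin m) ℝ)) 0 0
        (0 : Matrix (Fin n) (Fin n) ℝ) = diagonal (Sum.elim (fun _ => c) (fun _ => 0)) := by
      rw [smul_one_eq_diagonal, ← diagonal_zero, fromBlocks_diagonal]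
    rw [hd]
    refine Matrix.PosSemidef.diagonal fun x => ?_
    rcases x with x | x <;> simp [hc0]
  · rw [trace_add, trace_smul, trace_one, trace_Vz, trace_Wz]
    have hcm : c * ((Fintype.card (Fin m) : ℕ) : ℝ) = t - 2 * S := by
      rw [Fintype.card_fin, hc, div_mul_cancel₀ _ hm']
    rw [smul_eq_mul, ← hS]
    push_cast at hcm ⊢
    linarith


lemma u_zero (i : Fin n) (h : μ Z i = 0) : u Z i = 0 := by
  rw [u, Zv_zero Z i h, smul_zero]

lemma reverse (t : ℝ) (V : Matrix (Fin m) (Fin m) ℝ) (W : Matrix (Fin n) (Fin n) ℝ)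
    (hpsd : (fromBlocks V Z Zᵀ W).PosSemidef) (htr : V.trace + W.trace ≤ t) :
    ∑ i, σ Z i ≤ t / 2 := by
  have hZt : (Zᵀ : Matrix (Fin n) (Fin m) ℝ) = Zᴴ :=
    (conjTranspose_eq_transpose_of_trivial Z).symm
  -- the key quadratic inequality
  have hkey : ∀ (x : Fin m → ℝ) (y : Fin n → ℝ),
      2 * (x ⬝ᵥ (Z *ᵥ y)) ≤ x ⬝ᵥ (V *ᵥ x) + y ⬝ᵥ (W *ᵥ y) := by
    intro x y
    have h := hpsd.dotProduct_mulVec_nonneg (Sum.elim x (-y))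
    rw [star_trivial, fromBlocks_mulVec, sumElim_dotProduct_sumElim] at h
    have hyx : y ⬝ᵥ (Zᵀ *ᵥ x) = x ⬝ᵥ (Z *ᵥ y) := by
      rw [hZt, dp_trans, dotProduct_comm]
    simp only [Sum.elim_comp_inl, Sum.elim_comp_inr, dotProduct_add, mulVec_neg,
      dotProduct_neg, neg_dotProduct, neg_neg] at h
    rw [hyx] at h
    linarith
  have hVpsd : V.PosSemidef := by
    refine Matrix.PosSemidef.of_dotProduct_mulVec_nonneg ?_ ?_
    · ext a b
      have h := congrFun (congrFun hpsd.1 (Sum.inl a)) (Sum.inl b)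
      simpa [conjTranspose_apply, fromBlocks_apply₁₁] using h
    · intro x
      have h := hkey x 0
      simpa using h
  -- per-index inequality
  have h2 : ∀ i, 2 * σ Z i ≤ u Z i ⬝ᵥ (V *ᵥ u Z i) + v Z i ⬝ᵥ (W *ᵥ v Z i) := by
    intro i
    have := hkey (u Z i) (v Z i)
    rwa [uZv] at this
  set Q : Matrix (Fin m) (Fin m) ℝ := ∑ i, vecMulVec (u Z i) (u Z i) with hQ
  have hsumV : ∑ i, u Z i ⬝ᵥ (V *ᵥ u Z i) = (V * Q).trace := by
    rw [hQ, Matrix.mul_sum, trace_sum]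
    exact Finset.sum_congr rfl fun i _ => (trace_mul_vecMulVec V (u Z i) (u Z i)).symm
  have hsumW : ∑ i, v Z i ⬝ᵥ (W *ᵥ v Z i) = W.trace := by
    have : ∑ i, v Z i ⬝ᵥ (W *ᵥ v Z i) = (W * ∑ i, vecMulVec (v Z i) (v Z i)).trace := by
      rw [Matrix.mul_sum, trace_sum]
      exact Finset.sum_congr rfl fun i _ => (trace_mul_vecMulVec W (v Z i) (v Z i)).symm
    rw [this, complete, Matrix.mul_one]
  -- Q is a symmetric projection
  have hQQ : Q * Q = Q := by
    rw [hQ, Finset.sum_mul_sum]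
    have hterm : ∀ i j : Fin n, vecMulVec (u Z i) (u Z i) * vecMulVec (u Z j) (u Z j) =
        if i = j then vecMulVec (u Z i) (u Z i) else 0 := by
      intro i j
      rw [vecMulVec_mul_vecMulVec, uu]
      by_cases h : i = j
      · subst h
        by_cases h0 : μ Z i = 0
        · rw [u_zero Z i h0]
          simp only [h0, if_pos rfl, if_true]
          ext a b
          simp [vecMulVec_apply]
        · simp [h0]
      · simp [h]
    simp_rw [hterm]
    simp
  have hQsym : Qᴴ = Q := by
    rw [hQ, conjTranspose_sum]
    refine Finset.sum_congr rfl fun i _ => ?_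
    ext a b; simp [conjTranspose_apply, vecMulVec_apply, mul_comm]
  -- trace (V * Q) ≤ trace V
  have htrQ : (V * Q).trace ≤ V.trace := by
    set C : Matrix (Fin m) (Fin m) ℝ := 1 - Q with hC
    have hCC : C = Cᴴ * C := by
      have hCs : Cᴴ = C := by
        rw [hC, conjTranspose_sub, conjTranspose_one, hQsym]
      rw [hCs, hC, Matrix.sub_mul, Matrix.mul_sub, Matrix.mul_sub, Matrix.one_mul,
        Matrix.mul_one, hQQ]
      simp
    have hnn : 0 ≤ (V * C).trace := by
      rw [show V * C = V * (Cᴴ * C) by rw [← hCC], ← Matrix.mul_assoc, trace_mul_cycle]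
      exact (hVpsd.mul_mul_conjTranspose_same C).trace_nonneg
    have : V * C = V - V * Q := by rw [hC, Matrix.mul_sub, Matrix.mul_one]
    rw [this, trace_sub] at hnn
    linarith
  -- combine
  have hsum : 2 * (∑ i, σ Z i) ≤ (V * Q).trace + W.trace := by
    rw [← hsumV, ← hsumW, Finset.mul_sum, ← Finset.sum_add_distrib]
    exact Finset.sum_le_sum fun i _ => h2 i
  linarith


end NSDP

/-- Semidefinite characterization of the nuclear norm: for a nonzero `Z ∈ ℝ^{m×n}`,
`‖Z‖_nuc ≤ t/2` iff there are symmetric `V, W` with `[[V, Z], [Zᵀ, W]] ⪰ 0` and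
`tr V + tr W ≤ t`; moreover the same holds with equality `tr V + tr W = t`. -/
theorem nuclearNorm_le_iff_sdp
    {m n : ℕ} (Z : Matrix (Fin m) (Fin n) ℝ) (hZ : Z ≠ 0) (t : ℝ) :
    (nuclearNorm Z ≤ t / 2 ↔
      ∃ V : Matrix (Fin m) (Fin m) ℝ, ∃ W : Matrix (Fin n) (Fin n) ℝ,
        V.IsSymm ∧ W.IsSymm ∧
        (Matrix.fromBlocks V Z Z.transpose W).PosSemidef ∧
        V.trace + W.trace ≤ t) ∧
    (nuclearNorm Z ≤ t / 2 ↔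
      ∃ V : Matrix (Fin m) (Fin m) ℝ, ∃ W : Matrix (Fin n) (Fin n) ℝ,
        V.IsSymm ∧ W.IsSymm ∧
        (Matrix.fromBlocks V Z Z.transpose W).PosSemidef ∧
        V.trace + W.trace = t) := by
  have hnn : nuclearNorm Z = ∑ i, NSDP.σ Z i := rfl
  constructor
  · constructor
    · intro h
      obtain ⟨V, W, h1, h2, h3, h4⟩ := NSDP.forward Z hZ t (by rwa [hnn] at h)
      exact ⟨V, W, h1, h2, h3, le_of_eq h4⟩
    · rintro ⟨V, W, -, -, h3, h4⟩
      rw [hnn]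
      exact NSDP.reverse Z t V W h3 h4
  · constructor
    · intro h
      exact NSDP.forward Z hZ t (by rwa [hnn] at h)
    · rintro ⟨V, W, -, -, h3, h4⟩
      rw [hnn]
      exact NSDP.reverse Z t V W h3 h4.le
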